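/- Let Σ = {σ, ω} be a two-letter alphabet and for a language L ⊆ Σ* let L^⊙0 = {ε} and L^⊙(n+1) = L^⊙n ⧢ L, and let the iterated shuffle be L^⊗ = ⋃ₙ L^⊙n. Then the iterated shuffle of the single-word language {σω} is exactly the set of balanced words: {σω}^⊗ = { w ∈ Σ* : every prefix of w contains at least as many occurrences of σ as of ω, and w contains equally many occurrences of σ and ω }. -/

import Mathlib

/-- The two-letter alphabet `Σ = {σ, ω}`. -/
inductive TwoSym : Type
  | sig : TwoSym  -- the increment (signal) symbol σ
  | om : TwoSym
  deriving DecidableEq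

/-- `Interleave u v w` means that `w` is an interleaving (shuffle) of the words `u` and `v`. -/
inductive Interleave {α : Type*} : List α → List α → List α → Prop
  | nil : Interleave [] [] []
  | left {a : α} {u v w : List α} : Interleave u v w → Interleave (a :: u) v (a :: w)
  | right {a : α} {u v w : List α} : Interleave u v w → Interleave u (a :: v) (a :: w)

/-- The shuffle product of two languages. -/
def Language.shuffle {α : Type*} (L₁ L₂ : Language α) : Language α :=
  { w | ∃ u ∈ L₁, ∃ v ∈ L₂, Interleave u v w }

/-- The `n`-th shuffle power: `L^⊙0 = {ε}`, `L^⊙(n+1) = L^⊙n ⧢ L`. -/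
def Language.shufflePow {α : Type*} (L : Language α) : ℕ → Language α
  | 0 => 1
  | n + 1 => (L.shufflePow n).shuffle L

/-- The iterated shuffle (shuffle closure) `L^⊗ = ⋃ₙ L^⊙n`. -/
def Language.iterShuffle {α : Type*} (L : Language α) : Language α :=
  ⋃ n, L.shufflePow n

lemma interleave_count {α} [DecidableEq α] {u v w : List α} (h : Interleave u v w) (x : α) :
    w.count x = u.count x + v.count x := by
  induction h with
  | nil => simp
  | left h ih => simp [List.count_cons, ih]; split <;> omega
  | right h ih => simp [List.count_cons, ih]; split <;> omega

lemma interleave_prefix {α} {u v w : List α} (h : Interleave u v w) :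
    ∀ {p : List α}, p <+: w → ∃ q r, q <+: u ∧ r <+: v ∧ Interleave q r p := by
  induction h with
  | nil => intro p hp; simp at hp; exact ⟨[], [], by simp [hp], by simp [hp], by rw [hp]; exact .nil⟩
  | @left a u v w h ih =>
    rintro (_ | ⟨b, p⟩) hp
    · exact ⟨[], [], List.nil_prefix, List.nil_prefix, .nil⟩
    · rw [List.cons_prefix_cons] at hp
      obtain ⟨rfl, hp⟩ := hp
      obtain ⟨q, r, hq, hr, hi⟩ := ih hp
      exact ⟨b :: q, r, List.cons_prefix_cons.mpr ⟨rfl, hq⟩, hr, .left hi⟩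
  | @right a u v w h ih =>
    rintro (_ | ⟨b, p⟩) hp
    · exact ⟨[], [], List.nil_prefix, List.nil_prefix, .nil⟩
    · rw [List.cons_prefix_cons] at hp
      obtain ⟨rfl, hp⟩ := hp
      obtain ⟨q, r, hq, hr, hi⟩ := ih hp
      exact ⟨q, b :: r, hq, List.cons_prefix_cons.mpr ⟨rfl, hr⟩, .right hi⟩

lemma interleave_mid {α} (a b : List α) (x : α) : Interleave (a ++ b) [x] (a ++ x :: b) := by
  induction a with
  | nil =>
    refine .right ?_
    induction b with
    | nil => exact .nil
    | cons c t ih => exact .left ih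
  | cons c t ih => exact .left ih

lemma exists_split_first {α} [DecidableEq α] {l : List α} {x : α} (h : x ∈ l) :
    ∃ a b, l = a ++ x :: b ∧ x ∉ a := by
  induction l with
  | nil => cases h
  | cons y t ih =>
    by_cases hxy : y = x
    · exact ⟨[], t, by rw [hxy]; rfl, by simp⟩
    · obtain ⟨a, b, h1, h2⟩ := ih ((List.mem_cons.mp h).resolve_left (fun e => hxy e.symm))
      exact ⟨y :: a, b, by simp [h1], by simp [h2]; exact fun e => hxy e.symm⟩

def Bal (w : List TwoSym) : Prop :=
  (∀ p, p <+: w → p.count TwoSym.om ≤ p.count TwoSym.sig) ∧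
    w.count TwoSym.sig = w.count TwoSym.om

lemma bal_nil : Bal [] :=
  ⟨fun p hp => by simp [List.prefix_nil.mp hp], rfl⟩

lemma bal_pair : Bal [TwoSym.sig, TwoSym.om] := by
  refine ⟨fun p hp => ?_, by decide⟩
  have h := List.mem_inits p _ |>.mpr hp
  simp [List.inits] at h
  rcases h with rfl | rfl | rfl <;> decide

lemma bal_shuffle {u v w : List TwoSym} (hu : Bal u) (hv : Bal v) (h : Interleave u v w) :
    Bal w := by
  constructor
  · intro p hp
    obtain ⟨q, r, hq, hr, hi⟩ := interleave_prefix h hp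
    have h1 := interleave_count hi TwoSym.om
    have h2 := interleave_count hi TwoSym.sig
    have h3 := hu.1 q hq
    have h4 := hv.1 r hr
    omega
  · have h1 := interleave_count h TwoSym.om
    have h2 := interleave_count h TwoSym.sig
    have h3 := hu.2
    have h4 := hv.2
    omega

lemma pow_bal : ∀ n, ∀ w ∈ Language.shufflePow {[TwoSym.sig, TwoSym.om]} n, Bal w := by
  intro n
  induction n with
  | zero =>
    intro w hw
    rw [show w = [] from hw]
    exact bal_nil
  | succ n ih =>
    rintro w ⟨u, hu, v, hv, hi⟩
    rw [show v = [TwoSym.sig, TwoSym.om] from hv] at hi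
    exact bal_shuffle (ih u hu) bal_pair hi

lemma bal_mem : ∀ N, ∀ w : List TwoSym, w.length ≤ N → Bal w →
    ∃ n, w ∈ Language.shufflePow {[TwoSym.sig, TwoSym.om]} n := by
  intro N
  induction N with
  | zero =>
    intro w hl _
    have : w = [] := List.length_eq_zero_iff.mp (Nat.le_zero.mp hl)
    exact ⟨0, by rw [this]; rfl⟩
  | succ N ih =>
    intro w hl hw
    match w with
    | [] => exact ⟨0, rfl⟩
    | c :: t =>
      have hc : c = TwoSym.sig := by
        have h1 := hw.1 [c] ⟨t, rfl⟩
        cases c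
        · rfl
        · simp [List.count_cons] at h1
      subst hc
      have hom : 1 ≤ t.count TwoSym.om := by
        have h2 := hw.2
        simp [List.count_cons] at h2
        omega
      have hmem : TwoSym.om ∈ t := List.count_pos_iff.mp (by omega)
      obtain ⟨a, b, rfl, hna⟩ := exists_split_first hmem
      have ha0 : a.count TwoSym.om = 0 := List.count_eq_zero.mpr hna
      have hbal : Bal (a ++ b) := by
        constructor
        · intro q hq
          rcases List.prefix_or_prefix_of_prefix hq (List.prefix_append a b) with h | h
          · have := List.Sublist.count_le TwoSym.om h.sublist
            omega
          · obtain ⟨p, rfl⟩ := h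
            have hp : p <+: b := (List.prefix_append_right_inj a).mp hq
            have key := hw.1 (TwoSym.sig :: (a ++ TwoSym.om :: p))
              (by
                rw [List.cons_prefix_cons]
                exact ⟨rfl, by
                  rw [List.prefix_append_right_inj]
                  rw [List.cons_prefix_cons]
                  exact ⟨rfl, hp⟩⟩)
            simp [List.count_append, List.count_cons, ha0] at key ⊢
            omega
        · have h2 := hw.2
          simp [List.count_append, List.count_cons, ha0] at h2 ⊢
          omega
      have hlen : (a ++ b).length ≤ N := by
        simp at hl ⊢
        omega
      obtain ⟨n, hn⟩ := ih (a ++ b) hlen hbal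
      exact ⟨n + 1, ⟨a ++ b, hn, [TwoSym.sig, TwoSym.om], rfl,
        .right (interleave_mid a b TwoSym.om)⟩⟩

/-- The iterated shuffle of the single-word language `{σω}` is exactly the set of
balanced words over `{σ, ω}`. -/
theorem iterShuffle_sig_om_eq_balanced :
    Language.iterShuffle ({[TwoSym.sig, TwoSym.om]} : Language TwoSym) =
      { w : List TwoSym |
        (∀ p, p <+: w → p.count TwoSym.om ≤ p.count TwoSym.sig) ∧
        w.count TwoSym.sig = w.count TwoSym.om } := by
  ext w
  constructor
  · intro h
    obtain ⟨n, hn⟩ := Set.mem_iUnion.mp h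
    exact pow_bal n w hn
  · intro h
    exact Set.mem_iUnion.mpr (bal_mem w.length w le_rfl h)
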